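/- Let G be an Orlicz function that is differentiable on [0,∞), and let x ∈ ℝⁿ have nonnegative coordinates with x ≠ 0. Assume the Orlicz norm ‖·‖_G is differentiable at x, that ∑_{ℓ=1}^n G(x_ℓ/‖x‖_G) = 1, and that γ(x) := ∑_{ℓ=1}^n (x_ℓ/‖x‖_G)·G′(x_ℓ/‖x‖_G) ≠ 0. Then for every coordinate i, the partial derivative of the Orlicz norm at x equals ∂_i‖x‖_G = G′(x_i/‖x‖_G) / γ(x). -/

import Mathlib

noncomputable section

/-- An Orlicz function: continuous, convex and nondecreasing on `[0,∞)`, with `G 0 = 0` and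
`G(t) → ∞` as `t → ∞`. -/
def IsOrliczFunction (G : ℝ → ℝ) : Prop :=
  ContinuousOn G (Set.Ici 0) ∧ ConvexOn ℝ (Set.Ici 0) G ∧
  MonotoneOn G (Set.Ici 0) ∧ G 0 = 0 ∧
  Filter.Tendsto G Filter.atTop Filter.atTop

/-- The Orlicz norm generated by `G`: `inf {α > 0 : ∑ᵢ G (xᵢ/α) ≤ 1}`. -/
def orliczNorm {n : ℕ} (G : ℝ → ℝ) (x : Fin n → ℝ) : ℝ :=
  sInf {α : ℝ | 0 < α ∧ ∑ i, G (x i / α) ≤ 1}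

lemma orlicz_pos_unit {n : ℕ} (G : ℝ → ℝ) (hG : IsOrliczFunction G)
    (y : Fin n → ℝ) (hy : 0 ≤ y) (hy0 : y ≠ 0) :
    0 < orliczNorm G y ∧ ∑ ℓ, G (y ℓ / orliczNorm G y) = 1 := by
  obtain ⟨Gcont, -, Gmono, G0, Gtop⟩ := hG
  obtain ⟨j, hj⟩ : ∃ j, 0 < y j := by
    by_contra h
    push_neg at h
    exact hy0 (funext fun j => le_antisymm (h j) (hy j))
  have Gnonneg : ∀ t, 0 ≤ t → 0 ≤ G t := fun t ht => G0 ▸ Gmono Set.self_mem_Ici ht ht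
  set S : Set ℝ := {α : ℝ | 0 < α ∧ ∑ i, G (y i / α) ≤ 1} with hS
  -- S is nonempty
  have hne : S.Nonempty := by
    have hterm : ∀ ℓ : Fin n, Filter.Tendsto (fun α : ℝ => G (y ℓ / α))
        Filter.atTop (nhds 0) := by
      intro ℓ
      have h1 : Filter.Tendsto (fun α : ℝ => y ℓ / α) Filter.atTop
          (nhdsWithin 0 (Set.Ici 0)) := by
        rw [tendsto_nhdsWithin_iff]
        constructor
        · exact Filter.Tendsto.div_atTop tendsto_const_nhds Filter.tendsto_id
        · filter_upwards [Filter.eventually_gt_atTop 0] with α hα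
          exact div_nonneg (hy ℓ) hα.le
      have h2 : Filter.Tendsto G (nhdsWithin 0 (Set.Ici 0)) (nhds 0) := by
        have := Gcont 0 Set.self_mem_Ici
        rw [ContinuousWithinAt, G0] at this
        exact this
      exact h2.comp h1
    have hsum : Filter.Tendsto (fun α : ℝ => ∑ ℓ, G (y ℓ / α)) Filter.atTop (nhds 0) := by
      have := tendsto_finset_sum (Finset.univ : Finset (Fin n))
        (fun ℓ _ => hterm ℓ)
      simpa using this
    have := hsum.eventually_le_const (by norm_num : (0:ℝ) < 1)
    obtain ⟨α, hα1, hα2⟩ := (this.and (Filter.eventually_gt_atTop 0)).exists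
    exact ⟨α, hα2, hα1⟩
  -- S is bounded below by a positive constant
  obtain ⟨M, hM⟩ : ∃ M : ℝ, ∀ t ≥ M, 1 < G t := by
    have := Gtop.eventually (Filter.eventually_gt_atTop (1:ℝ))
    rw [Filter.eventually_atTop] at this
    exact this
  set M' : ℝ := max M 1 with hM'
  have hM'pos : (0:ℝ) < M' := lt_of_lt_of_le one_pos (le_max_right _ _)
  set δ : ℝ := y j / M' with hδ
  have hδpos : 0 < δ := div_pos hj hM'pos
  have hlb : ∀ α ∈ S, δ ≤ α := by
    intro α hα
    by_contra hlt
    push_neg at hlt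
    obtain ⟨hαpos, hαle⟩ := hα
    have h1 : M' < y j / α := by
      rw [lt_div_iff₀ hαpos]
      calc M' * α = α * M' := mul_comm _ _
        _ < δ * M' := by exact mul_lt_mul_of_pos_right hlt hM'pos
        _ = y j := by rw [hδ]; field_simp
    have h2 : 1 < G (y j / α) := hM _ (le_trans (le_max_left _ _) h1.le)
    have h3 : G (y j / α) ≤ ∑ ℓ, G (y ℓ / α) := by
      apply Finset.single_le_sum (f := fun ℓ => G (y ℓ / α))
      · intro ℓ _
        exact Gnonneg _ (div_nonneg (hy ℓ) hαpos.le)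
      · exact Finset.mem_univ j
    linarith
  have hbdd : BddBelow S := ⟨δ, hlb⟩
  have hNδ : δ ≤ orliczNorm G y := le_csInf hne hlb
  have hNpos : 0 < orliczNorm G y := lt_of_lt_of_le hδpos hNδ
  set N : ℝ := orliczNorm G y with hNdef
  -- continuity of Φ at N
  have hΦcont : Filter.Tendsto (fun α : ℝ => ∑ ℓ, G (y ℓ / α)) (nhds N)
      (nhds (∑ ℓ, G (y ℓ / N))) := by
    apply tendsto_finset_sum
    intro ℓ _
    have h1 : Filter.Tendsto (fun α : ℝ => y ℓ / α) (nhds N)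
        (nhdsWithin (y ℓ / N) (Set.Ici 0)) := by
      rw [tendsto_nhdsWithin_iff]
      constructor
      · exact (tendsto_const_nhds.div Filter.tendsto_id hNpos.ne')
      · filter_upwards [eventually_gt_nhds hNpos] with α hα
        exact div_nonneg (hy ℓ) hα.le
    exact (Gcont _ (div_nonneg (hy ℓ) hNpos.le)).tendsto.comp h1
  refine ⟨hNpos, le_antisymm ?_ ?_⟩
  · -- Φ N ≤ 1
    by_contra h
    push_neg at h
    have hev : ∀ᶠ α in nhds N, 1 < ∑ ℓ, G (y ℓ / α) :=
      hΦcont.eventually (eventually_gt_nhds h)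
    rw [Metric.eventually_nhds_iff] at hev
    obtain ⟨ε, hεpos, hε⟩ := hev
    obtain ⟨α, hαS, hαlt⟩ := (csInf_lt_iff hbdd hne).mp
      (show sInf S < N + ε by exact lt_add_of_pos_right N hεpos)
    have hαge : N ≤ α := csInf_le hbdd hαS
    have : 1 < ∑ ℓ, G (y ℓ / α) := by
      apply hε
      rw [Real.dist_eq, abs_lt]
      constructor <;> linarith
    linarith [hαS.2]
  · -- 1 ≤ Φ N
    by_contra h
    push_neg at h
    have hev : ∀ᶠ α in nhds N, ∑ ℓ, G (y ℓ / α) < 1 :=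
      hΦcont.eventually (eventually_lt_nhds h)
    rw [Metric.eventually_nhds_iff] at hev
    obtain ⟨ε, hεpos, hε⟩ := hev
    set α := N - min (ε/2) (N/2) with hα
    have hαpos : 0 < α := by
      have := min_le_right (ε/2) (N/2)
      simp only [hα]
      nlinarith [min_le_right (ε/2) (N/2), hNpos]
    have hαS : α ∈ S := by
      refine ⟨hαpos, le_of_lt (hε ?_)⟩
      rw [Real.dist_eq, abs_lt]
      have h1 := min_le_left (ε/2) (N/2)
      have h2 : 0 < min (ε/2) (N/2) := lt_min (by linarith) (by linarith)
      constructor <;> simp only [hα] <;> linarith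
    have : N ≤ α := csInf_le hbdd hαS
    have h2 : 0 < min (ε/2) (N/2) := lt_min (by linarith) (by linarith)
    simp only [hα] at this
    linarith

/-- The gradient formula for the Orlicz norm: if `‖·‖_G` is differentiable at `x` with
derivative `D`, `∑ₗ G(xₗ/‖x‖_G) = 1`, and `γ(x) = ∑ₗ (xₗ/‖x‖_G)·G′(xₗ/‖x‖_G) ≠ 0`, then
`∂ᵢ‖x‖_G = G′(xᵢ/‖x‖_G) / γ(x)`. -/
theorem orliczNorm_gradient {n : ℕ} (G G' : ℝ → ℝ) (hG : IsOrliczFunction G)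
    (hd : ∀ t ∈ Set.Ici (0 : ℝ), HasDerivWithinAt G (G' t) (Set.Ici 0) t)
    (x : Fin n → ℝ) (hx : 0 ≤ x) (hx0 : x ≠ 0)
    (D : (Fin n → ℝ) →L[ℝ] ℝ)
    (hdiff : HasFDerivAt (orliczNorm G) D x)
    (hunit : ∑ ℓ, G (x ℓ / orliczNorm G x) = 1)
    (hγ : (∑ ℓ, (x ℓ / orliczNorm G x) * G' (x ℓ / orliczNorm G x)) ≠ 0) :
    ∀ i : Fin n,
      D (Pi.single i 1) =
        G' (x i / orliczNorm G x) /
          (∑ ℓ, (x ℓ / orliczNorm G x) * G' (x ℓ / orliczNorm G x)) := by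
  intro i
  set e : Fin n → ℝ := Pi.single i 1 with he
  have henn : ∀ ℓ, 0 ≤ e ℓ := by
    intro ℓ
    rw [he, Pi.single_apply]
    split <;> norm_num
  obtain ⟨j, hj⟩ : ∃ j, 0 < x j := by
    by_contra h
    push_neg at h
    exact hx0 (funext fun j => le_antisymm (h j) (hx j))
  -- the curve t ↦ x + t • e stays admissible for t ≥ 0
  have hcadm : ∀ t ∈ Set.Ici (0:ℝ), 0 ≤ x + t • e ∧ x + t • e ≠ 0 := by
    intro t ht
    have h1 : ∀ ℓ, 0 ≤ (x + t • e) ℓ := by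
      intro ℓ
      simp only [Pi.add_apply, Pi.smul_apply, smul_eq_mul]
      have h2 := mul_nonneg ht (henn ℓ)
      have h3 : (0:ℝ) ≤ x ℓ := by simpa using hx ℓ
      linarith
    refine ⟨fun ℓ => h1 ℓ, fun hcon => ?_⟩
    have : (x + t • e) j = 0 := by rw [hcon]; rfl
    simp only [Pi.add_apply, Pi.smul_apply, smul_eq_mul] at this
    have := mul_nonneg ht (henn j)
    linarith
  have hpos : ∀ t ∈ Set.Ici (0:ℝ), 0 < orliczNorm G (x + t • e) :=
    fun t ht => (orlicz_pos_unit G hG _ (hcadm t ht).1 (hcadm t ht).2).1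
  have hunit' : ∀ t ∈ Set.Ici (0:ℝ),
      ∑ ℓ, G ((x + t • e) ℓ / orliczNorm G (x + t • e)) = 1 :=
    fun t ht => (orlicz_pos_unit G hG _ (hcadm t ht).1 (hcadm t ht).2).2
  set N : ℝ := orliczNorm G x with hN
  have hNpos : 0 < N := by
    have := hpos 0 Set.self_mem_Ici
    simpa using this
  have h0e : x + (0:ℝ) • e = x := by simp
  -- derivative of the norm along the curve
  have hf : HasDerivAt (fun t : ℝ => orliczNorm G (x + t • e)) (D e) 0 := by
    have hc : HasDerivAt (fun t : ℝ => x + t • e) e 0 := by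
      simpa using ((hasDerivAt_id (0:ℝ)).smul_const e).const_add x
    have hdiff' : HasFDerivAt (orliczNorm G) D (x + (0:ℝ) • e) := by
      rw [h0e]; exact hdiff
    have := hdiff'.comp_hasDerivAt 0 hc
    exact this
  -- the constraint function g
  set g : ℝ → ℝ := fun t => ∑ ℓ, G ((x + t • e) ℓ / orliczNorm G (x + t • e)) with hg
  have h1 : HasDerivWithinAt g 0 (Set.Ici 0) 0 := by
    exact (hasDerivWithinAt_const 0 (Set.Ici 0) 1).congr
      (fun t ht => hunit' t ht) (hunit' 0 Set.self_mem_Ici)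
  have h2 : HasDerivWithinAt g
      (∑ ℓ, G' (x ℓ / N) * ((e ℓ * N - x ℓ * D e) / N ^ 2)) (Set.Ici 0) 0 := by
    apply HasDerivWithinAt.fun_sum
    intro ℓ _
    have hnum : HasDerivWithinAt (fun t : ℝ => (x + t • e) ℓ) (e ℓ) (Set.Ici 0) 0 := by
      have : HasDerivAt (fun t : ℝ => x ℓ + t * e ℓ) (e ℓ) 0 := by
        simpa using ((hasDerivAt_id (0:ℝ)).mul_const (e ℓ)).const_add (x ℓ)
      exact this.hasDerivWithinAt.congr (fun t _ => by simp) (by simp)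
    have hden : HasDerivWithinAt (fun t : ℝ => orliczNorm G (x + t • e)) (D e)
        (Set.Ici 0) 0 := hf.hasDerivWithinAt
    have hden0 : orliczNorm G (x + (0:ℝ) • e) ≠ 0 := (hpos 0 Set.self_mem_Ici).ne'
    have hq := hnum.div hden hden0
    have hmaps : Set.MapsTo (fun t : ℝ => (x + t • e) ℓ / orliczNorm G (x + t • e))
        (Set.Ici 0) (Set.Ici 0) := by
      intro t ht
      exact div_nonneg ((hcadm t ht).1 ℓ) (hpos t ht).le
    have hval : (x + (0:ℝ) • e) ℓ / orliczNorm G (x + (0:ℝ) • e) = x ℓ / N := by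
      rw [h0e, hN]
    have hGd : HasDerivWithinAt G (G' (x ℓ / N)) (Set.Ici 0)
        ((x + (0:ℝ) • e) ℓ / orliczNorm G (x + (0:ℝ) • e)) := by
      rw [hval]
      exact hd _ (div_nonneg (by simpa using hx ℓ) hNpos.le)
    have := hGd.comp (0:ℝ) hq hmaps
    convert this using 1
    · rfl
    · rfl
    rw [h0e, ← hN]
  -- uniqueness of the derivative within Ici 0
  have huniq : UniqueDiffWithinAt ℝ (Set.Ici (0:ℝ)) 0 :=
    uniqueDiffOn_Ici 0 0 Set.self_mem_Ici
  have heq : (0:ℝ) = ∑ ℓ, G' (x ℓ / N) * ((e ℓ * N - x ℓ * D e) / N ^ 2) := by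
    rw [← h1.derivWithin huniq, h2.derivWithin huniq]
  -- algebra
  have hsum : ∑ ℓ, G' (x ℓ / N) * ((e ℓ * N - x ℓ * D e) / N ^ 2)
      = G' (x i / N) / N - D e / N * ∑ ℓ, (x ℓ / N) * G' (x ℓ / N) := by
    have hterm : ∀ ℓ, G' (x ℓ / N) * ((e ℓ * N - x ℓ * D e) / N ^ 2)
        = G' (x ℓ / N) * e ℓ / N - D e / N * ((x ℓ / N) * G' (x ℓ / N)) := by
      intro ℓ
      field_simp
    rw [Finset.sum_congr rfl (fun ℓ _ => hterm ℓ), Finset.sum_sub_distrib,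
      ← Finset.mul_sum]
    congr 1
    rw [← Finset.sum_div]
    congr 1
    simp [he, Pi.single_apply, mul_ite, Finset.sum_ite_eq']
  rw [hsum] at heq
  set γ : ℝ := ∑ ℓ, (x ℓ / N) * G' (x ℓ / N) with hγdef
  have hγ' : γ ≠ 0 := hγ
  have hNne : N ≠ 0 := hNpos.ne'
  have : D e = G' (x i / N) / γ := by
    have h3 : G' (x i / N) / N = D e / N * γ := by linarith
    field_simp at h3
    field_simp
    linarith [h3]
  exact this
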